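/- For s = (s_1,...,s_d) positive integers, n ≥ 1, and real numbers a and p, the binomial mean M_n = ∑_{k=1}^n C(n,k) p^k (1-p)^{n-k} ζ_k^⋆(s_1,...,s_d; a) equals ∑_{n ≥ n_1 ≥ ... ≥ n_w ≥ 1} [∏_{r=1}^d (1-p)^{n_{l(r-1)+1} - n_{l(r)}}] ((1-p+ap)^{n_w} - (1-p)^{n_w}) / (n_1 ··· n_w), where w = s_1+...+s_d and l(i) = s_1+...+s_i. -/

import Mathlib

/-- Weakly decreasing chains `hi ≥ f 0 ≥ f 1 ≥ ⋯ ≥ f (d-1) ≥ lo`. -/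
def chainsIcc (d lo hi : ℕ) : Finset (Fin d → ℕ) :=
  (Fintype.piFinset fun _ : Fin d => Finset.Icc lo hi).filter
    fun f => ∀ i j : Fin d, i ≤ j → f j ≤ f i

/-- `idx f j` is the paper's `n_j` (1-indexed entry of the chain `f`). -/
def idx {w : ℕ} (f : Fin w → ℕ) (j : ℕ) : ℕ :=
  if h : j - 1 < w then f ⟨j - 1, h⟩ else 0

def lsum (s : ℕ → ℕ) (i : ℕ) : ℕ := ∑ j ∈ Finset.range i, s j

lemma mem_chainsIcc {d lo hi : ℕ} {f : Fin d → ℕ} :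
    f ∈ chainsIcc d lo hi ↔ (∀ i, lo ≤ f i ∧ f i ≤ hi) ∧ ∀ i j : Fin d, i ≤ j → f j ≤ f i := by
  simp [chainsIcc, Fintype.mem_piFinset, Finset.mem_Icc, forall_and]

lemma sum_chainsIcc_zero {M : Type*} [AddCommMonoid M] (lo hi : ℕ) (F : (Fin 0 → ℕ) → M) :
    ∑ f ∈ chainsIcc 0 lo hi, F f = F (fun i => i.elim0) := by
  have h : chainsIcc 0 lo hi = {fun i => i.elim0} := by
    ext f
    simp only [mem_chainsIcc, Finset.mem_singleton]
    constructor
    · intro _; funext i; exact i.elim0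
    · intro _; exact ⟨fun i => i.elim0, fun i => i.elim0⟩
  rw [h, Finset.sum_singleton]

lemma sum_chainsIcc_cons {M : Type*} [AddCommMonoid M] (d lo hi : ℕ) (F : (Fin (d+1) → ℕ) → M) :
    ∑ f ∈ chainsIcc (d+1) lo hi, F f
      = ∑ j ∈ Finset.Icc lo hi, ∑ g ∈ chainsIcc d lo j, F (Fin.cons j g) := by
  rw [← Finset.sum_sigma (Finset.Icc lo hi) (fun j => chainsIcc d lo j)
      (fun x => F (Fin.cons x.1 x.2))]
  apply Finset.sum_nbij' (i := fun f => (⟨f 0, Fin.tail f⟩ : Σ _ : ℕ, (Fin d → ℕ)))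
    (j := fun x => Fin.cons x.1 x.2)
  · intro f hf
    rw [mem_chainsIcc] at hf
    obtain ⟨hmem, hchain⟩ := hf
    rw [Finset.mem_sigma]
    constructor
    · exact Finset.mem_Icc.2 ⟨(hmem 0).1, (hmem 0).2⟩
    · rw [mem_chainsIcc]
      refine ⟨fun i => ⟨(hmem i.succ).1, hchain 0 i.succ (Fin.zero_le _)⟩, ?_⟩
      intro i j hij
      exact hchain i.succ j.succ (by simpa using hij)
  · intro x hx
    rw [Finset.mem_sigma] at hx
    obtain ⟨hj, hg⟩ := hx
    rw [Finset.mem_Icc] at hj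
    rw [mem_chainsIcc] at hg
    obtain ⟨hmem, hchain⟩ := hg
    rw [mem_chainsIcc]
    constructor
    · intro i
      refine Fin.cases ?_ ?_ i
      · simpa using hj
      · intro k
        simp only [Fin.cons_succ]
        exact ⟨(hmem k).1, le_trans (hmem k).2 hj.2⟩
    · intro i j hij
      induction j using Fin.cases with
      | zero =>
        have : i = 0 := le_antisymm (by simpa using hij) (Fin.zero_le _)
        subst this; rfl
      | succ k =>
        induction i using Fin.cases with
        | zero =>
          simp only [Fin.cons_succ, Fin.cons_zero]
          exact (hmem k).2
        | succ m =>
          simp only [Fin.cons_succ]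
          exact hchain m k (by simpa [Fin.succ_le_succ_iff] using hij)
  · intro f hf; exact Fin.cons_self_tail f
  · intro x hx; simp [Fin.tail_cons]
  · intro f hf; rw [Fin.cons_self_tail]

lemma idx_eq {w : ℕ} (f : Fin w → ℕ) (i : ℕ) (h : i < w) : idx f (i+1) = f ⟨i, h⟩ := by
  simp [idx, h]

lemma idx_cons_one {w : ℕ} (j : ℕ) (g : Fin w → ℕ) : idx (Fin.cons j g) 1 = j := by
  simp [idx]

lemma idx_cons_succ {w : ℕ} (j : ℕ) (g : Fin w → ℕ) (i : ℕ) (hi : 1 ≤ i) :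
    idx (Fin.cons j g) (i+1) = idx g i := by
  cases i with
  | zero => omega
  | succ i =>
    simp only [idx, Nat.add_sub_cancel]
    by_cases h : i < w
    · rw [dif_pos (by omega : i + 1 < w + 1), dif_pos h]
      rfl
    · rw [dif_neg (by omega), dif_neg h]

lemma idx_le_hi {w lo hi : ℕ} {f : Fin w → ℕ} (hf : f ∈ chainsIcc w lo hi) (i : ℕ) (h : i < w) :
    idx f (i+1) ≤ hi := by
  rw [idx_eq f i h]
  exact ((mem_chainsIcc.1 hf).1 _).2

noncomputable section

def Bin (p : ℝ) (G : ℕ → ℝ) (n : ℕ) : ℝ :=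
  ∑ k ∈ Finset.Icc 1 n, (n.choose k : ℝ) * p ^ k * (1 - p) ^ (n - k) * G k

def G0 (a p : ℝ) (m : ℕ) : ℝ := (1 - p + a * p) ^ m - (1 - p) ^ m

def Aop (p : ℝ) (G : ℕ → ℝ) (b : ℕ) : ℝ :=
  ∑ j ∈ Finset.Icc 1 b, (1 - p) ^ (b - j) * G j / j

def Bop (G : ℕ → ℝ) (b : ℕ) : ℝ := ∑ j ∈ Finset.Icc 1 b, G j / j

lemma L0 (a p : ℝ) (n : ℕ) : Bin p (fun k => a ^ k) n = G0 a p n := by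
  have h := add_pow (a * p) (1 - p) n
  have hr : Finset.Icc 1 n = (Finset.range (n+1)).erase 0 := by
    ext k; simp [Finset.mem_Icc, Finset.mem_range, Finset.mem_erase]; omega
  have h0 : (0:ℕ) ∈ Finset.range (n+1) := by simp
  rw [Bin, hr, G0]
  have hsum : ∑ k ∈ (Finset.range (n+1)).erase 0, (n.choose k : ℝ) * p ^ k * (1 - p) ^ (n - k) * a ^ k
      = ∑ k ∈ (Finset.range (n+1)).erase 0, (a*p)^k * (1-p)^(n-k) * (n.choose k : ℝ) := by
    apply Finset.sum_congr rfl; intro k _; rw [mul_pow]; ring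
  rw [hsum]
  have key := Finset.add_sum_erase (Finset.range (n+1))
    (fun k => (a*p)^k * (1-p)^(n-k) * (n.choose k : ℝ)) h0
  simp only [pow_zero, one_mul, Nat.sub_zero, Nat.choose_zero_right, Nat.cast_one,
    mul_one] at key
  rw [← h] at key
  have hcomm : a*p + (1-p) = 1 - p + a*p := by ring
  rw [hcomm] at key
  linarith

lemma LA (p : ℝ) (g : ℕ → ℝ) (n : ℕ) :
    Bin p (fun k => g k / k) n = Aop p (Bin p g) n := by
  induction n with
  | zero => simp [Bin, Aop]
  | succ n ih =>
    have hA : Aop p (Bin p g) (n+1)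
        = (1-p) * Aop p (Bin p g) n + Bin p g (n+1) / (n+1) := by
      rw [Aop, Finset.sum_Icc_succ_top (by omega : 1 ≤ n + 1), Aop, Finset.mul_sum]
      congr 1
      · apply Finset.sum_congr rfl
        intro j hj
        rw [Finset.mem_Icc] at hj
        rw [show n + 1 - j = (n - j) + 1 by omega, pow_succ]
        ring
      · simp
    rw [hA, ← ih]
    have hsplit : Bin p (fun k => g k / k) (n+1)
        = (∑ k ∈ Finset.Icc 1 (n+1), (n.choose k : ℝ) * p ^ k * (1-p) ^ (n+1-k) * (g k / k))
          + ∑ k ∈ Finset.Icc 1 (n+1), (n.choose (k-1) : ℝ) * p ^ k * (1-p) ^ (n+1-k) * (g k / k) := by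
      rw [Bin, ← Finset.sum_add_distrib]
      apply Finset.sum_congr rfl
      intro k hk
      rw [Finset.mem_Icc] at hk
      have : ((n+1).choose k : ℝ) = (n.choose k : ℝ) + (n.choose (k-1) : ℝ) := by
        obtain ⟨k', rfl⟩ : ∃ k', k = k' + 1 := ⟨k - 1, by omega⟩
        rw [Nat.choose_succ_succ]
        push_cast; simp; ring
      rw [this]; ring
    have h1 : (∑ k ∈ Finset.Icc 1 (n+1), (n.choose k : ℝ) * p ^ k * (1-p) ^ (n+1-k) * (g k / k))
        = (1-p) * Bin p (fun k => g k / k) n := by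
      rw [Finset.sum_Icc_succ_top (by omega : 1 ≤ n + 1), Bin, Finset.mul_sum]
      rw [Nat.choose_succ_self]
      simp only [Nat.cast_zero, zero_mul, mul_zero, zero_div, add_zero]
      apply Finset.sum_congr rfl
      intro j hj
      rw [Finset.mem_Icc] at hj
      rw [show n + 1 - j = (n - j) + 1 by omega, pow_succ]
      ring
    have h2 : (∑ k ∈ Finset.Icc 1 (n+1), (n.choose (k-1) : ℝ) * p ^ k * (1-p) ^ (n+1-k) * (g k / k))
        = Bin p g (n+1) / (n+1) := by
      rw [Bin, Finset.sum_div]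
      apply Finset.sum_congr rfl
      intro k hk
      rw [Finset.mem_Icc] at hk
      have hnat : (n + 1) * n.choose (k-1) = ((n+1).choose k) * k := by
        obtain ⟨k', rfl⟩ : ∃ k', k = k' + 1 := ⟨k - 1, by omega⟩
        simpa using Nat.add_one_mul_choose_eq n k'
      have hcast : ((n:ℝ) + 1) * (n.choose (k-1) : ℝ) = ((n+1).choose k : ℝ) * k := by
        exact_mod_cast congrArg (Nat.cast : ℕ → ℝ) hnat
      have hk0 : (k:ℝ) ≠ 0 := by
        have : k ≠ 0 := by omega
        exact_mod_cast this
      field_simp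
      linear_combination g k * p ^ k * (1 - p) ^ (n + 1 - k) * hcast
    rw [hsplit, h1, h2]

lemma sum_Icc_swap (n : ℕ) (F : ℕ → ℕ → ℝ) :
    ∑ k ∈ Finset.Icc 1 n, ∑ m ∈ Finset.Icc 1 k, F k m
      = ∑ m ∈ Finset.Icc 1 n, ∑ k ∈ Finset.Icc m n, F k m := by
  induction n with
  | zero => simp
  | succ n ih =>
    have h1 : ∑ m ∈ Finset.Icc 1 n, ∑ k ∈ Finset.Icc m (n+1), F k m
        = ∑ m ∈ Finset.Icc 1 n, (∑ k ∈ Finset.Icc m n, F k m + F (n+1) m) := by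
      apply Finset.sum_congr rfl
      intro m hm
      rw [Finset.mem_Icc] at hm
      rw [Finset.sum_Icc_succ_top (by omega : m ≤ n + 1)]
    have h2 : Finset.Icc (n+1) (n+1) = {n+1} := by simp
    have hR : ∑ m ∈ Finset.Icc 1 (n+1), ∑ k ∈ Finset.Icc m (n+1), F k m
        = (∑ m ∈ Finset.Icc 1 n, ∑ k ∈ Finset.Icc m n, F k m)
          + ∑ m ∈ Finset.Icc 1 (n+1), F (n+1) m := by
      rw [Finset.sum_Icc_succ_top (by omega : 1 ≤ n + 1), h1, Finset.sum_add_distrib, h2,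
        Finset.sum_singleton, Finset.sum_Icc_succ_top (by omega : 1 ≤ n + 1)]
      ring
    have hL : ∑ k ∈ Finset.Icc 1 (n+1), ∑ m ∈ Finset.Icc 1 k, F k m
        = (∑ k ∈ Finset.Icc 1 n, ∑ m ∈ Finset.Icc 1 k, F k m)
          + ∑ m ∈ Finset.Icc 1 (n+1), F (n+1) m := by
      rw [Finset.sum_Icc_succ_top (by omega : 1 ≤ n + 1)]
    rw [hL, hR, ih]

lemma LNB (p : ℝ) (m : ℕ) (hm : 1 ≤ m) : ∀ n : ℕ,
    ∑ k ∈ Finset.Icc m n, (n.choose k : ℝ) * p ^ k * (1-p) ^ (n - k)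
      = ∑ j ∈ Finset.Icc m n, ((j-1).choose (m-1) : ℝ) * p ^ m * (1-p) ^ (j - m) := by
  intro n
  induction n with
  | zero =>
    have : Finset.Icc m 0 = ∅ := by
      rw [Finset.Icc_eq_empty_iff]; omega
    simp [this]
  | succ n ih =>
    by_cases hmn : m ≤ n + 1
    · have hsplit : ∑ k ∈ Finset.Icc m (n+1), ((n+1).choose k : ℝ) * p ^ k * (1-p) ^ (n+1-k)
          = (∑ k ∈ Finset.Icc m (n+1), (n.choose k : ℝ) * p ^ k * (1-p) ^ (n+1-k))
            + ∑ k ∈ Finset.Icc m (n+1), (n.choose (k-1) : ℝ) * p ^ k * (1-p) ^ (n+1-k) := by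
        rw [← Finset.sum_add_distrib]
        apply Finset.sum_congr rfl
        intro k hk
        rw [Finset.mem_Icc] at hk
        obtain ⟨k', rfl⟩ : ∃ k', k = k' + 1 := ⟨k - 1, by omega⟩
        rw [Nat.choose_succ_succ]
        push_cast; simp; ring
      have hA : ∑ k ∈ Finset.Icc m (n+1), (n.choose k : ℝ) * p ^ k * (1-p) ^ (n+1-k)
          = (1-p) * ∑ k ∈ Finset.Icc m n, (n.choose k : ℝ) * p ^ k * (1-p) ^ (n-k) := by
        rw [Finset.sum_Icc_succ_top hmn, Nat.choose_succ_self, Finset.mul_sum]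
        simp only [Nat.cast_zero, zero_mul, add_zero]
        apply Finset.sum_congr rfl
        intro k hk
        rw [Finset.mem_Icc] at hk
        rw [show n + 1 - k = (n - k) + 1 by omega, pow_succ]
        ring
      have hB : ∑ k ∈ Finset.Icc m (n+1), (n.choose (k-1) : ℝ) * p ^ k * (1-p) ^ (n+1-k)
          = p * (∑ k ∈ Finset.Icc m n, (n.choose k : ℝ) * p ^ k * (1-p) ^ (n-k))
            + (n.choose (m-1) : ℝ) * p ^ m * (1-p) ^ (n+1-m) := by
        have hmap : Finset.Icc m (n+1) = (Finset.Icc (m-1) n).map (addRightEmbedding 1) := by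
          rw [Finset.map_add_right_Icc, show m - 1 + 1 = m by omega]
        rw [hmap, Finset.sum_map]
        simp only [addRightEmbedding_apply, Nat.add_sub_cancel]
        have hlo : Finset.Icc (m-1) n = insert (m-1) (Finset.Icc m n) := by
          ext x
          simp only [Finset.mem_Icc, Finset.mem_insert]
          omega
        rw [hlo, Finset.sum_insert (by simp [Finset.mem_Icc]; omega)]
        rw [show m - 1 + 1 = m by omega, Finset.mul_sum]
        have : ∀ k ∈ Finset.Icc m n, (n.choose k : ℝ) * p ^ (k+1) * (1-p) ^ (n+1-(k+1))
            = p * ((n.choose k : ℝ) * p ^ k * (1-p) ^ (n-k)) := by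
          intro k hk
          rw [Finset.mem_Icc] at hk
          rw [show n + 1 - (k+1) = n - k by omega, pow_succ]
          ring
        rw [Finset.sum_congr rfl this]
        rw [show n + 1 - m = n - (m-1) by omega]
        ring
      have hR : ∑ j ∈ Finset.Icc m (n+1), ((j-1).choose (m-1) : ℝ) * p ^ m * (1-p) ^ (j - m)
          = (∑ j ∈ Finset.Icc m n, ((j-1).choose (m-1) : ℝ) * p ^ m * (1-p) ^ (j - m))
            + (n.choose (m-1) : ℝ) * p ^ m * (1-p) ^ (n+1-m) := by
        rw [Finset.sum_Icc_succ_top hmn]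
        simp [Nat.add_sub_cancel]
      rw [hsplit, hA, hB, ih, hR]
      ring
    · have : Finset.Icc m (n+1) = ∅ := by
        rw [Finset.Icc_eq_empty_iff]; omega
      simp [this]

lemma LB (p : ℝ) (g : ℕ → ℝ) (n : ℕ) :
    Bin p (fun k => ∑ m ∈ Finset.Icc 1 k, g m / m) n = Bop (Bin p g) n := by
  rw [Bin]
  have h1 : ∑ k ∈ Finset.Icc 1 n, (n.choose k : ℝ) * p ^ k * (1-p) ^ (n-k)
        * ∑ m ∈ Finset.Icc 1 k, g m / m
      = ∑ k ∈ Finset.Icc 1 n, ∑ m ∈ Finset.Icc 1 k,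
          ((n.choose k : ℝ) * p ^ k * (1-p) ^ (n-k)) * (g m / m) := by
    apply Finset.sum_congr rfl; intro k _; rw [Finset.mul_sum]
  rw [h1, sum_Icc_swap]
  have h2 : ∀ m ∈ Finset.Icc 1 n,
      ∑ k ∈ Finset.Icc m n, ((n.choose k : ℝ) * p ^ k * (1-p) ^ (n-k)) * (g m / m)
      = ∑ j ∈ Finset.Icc m n, (((j-1).choose (m-1) : ℝ) * p ^ m * (1-p) ^ (j-m)) * (g m / m) := by
    intro m hm
    rw [Finset.mem_Icc] at hm
    rw [← Finset.sum_mul, ← Finset.sum_mul, LNB p m hm.1 n]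
  rw [Finset.sum_congr rfl h2, ← sum_Icc_swap]
  rw [Bop]
  apply Finset.sum_congr rfl
  intro j hj
  rw [Finset.mem_Icc] at hj
  rw [Bin, Finset.sum_div]
  apply Finset.sum_congr rfl
  intro m hm
  rw [Finset.mem_Icc] at hm
  have hnat : j * ((j-1).choose (m-1)) = (j.choose m) * m := by
    have := Nat.add_one_mul_choose_eq (j-1) (m-1)
    rw [show j - 1 + 1 = j by omega, show m - 1 + 1 = m by omega] at this
    exact this
  have hcast : (j : ℝ) * ((j-1).choose (m-1) : ℝ) = (j.choose m : ℝ) * m := by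
    exact_mod_cast congrArg (Nat.cast : ℕ → ℝ) hnat
  have hm0 : (m:ℝ) ≠ 0 := by
    have : m ≠ 0 := by omega
    exact_mod_cast this
  have hj0 : (j:ℝ) ≠ 0 := by
    have : j ≠ 0 := by omega
    exact_mod_cast this
  field_simp
  linear_combination g m * p ^ m * (1 - p) ^ (j - m) * hcast

lemma LAiter (p : ℝ) (g : ℕ → ℝ) (e : ℕ) :
    (fun n => Bin p (fun k => g k / (k:ℝ)^e) n) = (Aop p)^[e] (fun n => Bin p g n) := by
  induction e with
  | zero => simp
  | succ e ih =>
    have hfun : (fun k : ℕ => g k / (k:ℝ)^(e+1)) = fun k => (g k / (k:ℝ)^e) / k := by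
      funext k; rw [pow_succ, ← div_div]
    rw [Function.iterate_succ_apply', ← ih]
    funext n
    rw [hfun, LA p (fun k => g k / (k:ℝ)^e) n]

def Zf (a : ℝ) : List ℕ → ℕ → ℝ
  | [], k => a ^ k
  | s :: t, k => ∑ m ∈ Finset.Icc 1 k, Zf a t m / (m:ℝ) ^ s

def Rf (a p : ℝ) : List ℕ → ℕ → ℝ
  | [] => G0 a p
  | s :: t => Bop ((Aop p)^[s-1] (Rf a p t))

lemma MT (a p : ℝ) : ∀ l : List ℕ, (∀ x ∈ l, 1 ≤ x) →
    ∀ n, Bin p (Zf a l) n = Rf a p l n := by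
  intro l
  induction l with
  | nil =>
    intro _ n
    exact L0 a p n
  | cons s t ih =>
    intro hl n
    have hs : 1 ≤ s := hl s (by simp)
    obtain ⟨e, rfl⟩ : ∃ e, s = e + 1 := ⟨s - 1, by omega⟩
    have hZ : Zf a ((e+1) :: t) = fun k => ∑ m ∈ Finset.Icc 1 k, (Zf a t m / (m:ℝ)^e) / m := by
      funext k
      show ∑ m ∈ Finset.Icc 1 k, Zf a t m / (m:ℝ) ^ (e+1) = _
      apply Finset.sum_congr rfl
      intro m _
      rw [pow_succ, ← div_div]
    have hit : Bin p (fun m => Zf a t m / (m:ℝ)^e) = (Aop p)^[e] (Bin p (Zf a t)) := by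
      have := LAiter p (Zf a t) e
      exact this
    have hRt : Bin p (Zf a t) = Rf a p t := by
      funext n'; exact ih (fun x hx => hl x (by simp [hx])) n'
    rw [hZ, LB p (fun m => Zf a t m / (m:ℝ)^e) n, hit, hRt]
    show Bop ((Aop p)^[e] (Rf a p t)) n = Bop ((Aop p)^[(e+1)-1] (Rf a p t)) n
    norm_num

lemma Z_eq (a : ℝ) : ∀ d (s : ℕ → ℕ) (k : ℕ),
    (∑ m ∈ chainsIcc (d+1) 1 k,
        a ^ (idx m (d+1)) / ∏ j ∈ Finset.range (d+1), (idx m (j+1) : ℝ) ^ s j)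
      = Zf a ((List.range (d+1)).map s) k := by
  intro d
  induction d with
  | zero =>
    intro s k
    rw [sum_chainsIcc_cons 0 1 k]
    have : ∀ j ∈ Finset.Icc 1 k,
        (∑ g ∈ chainsIcc 0 1 j, a ^ (idx (Fin.cons j g) 1)
          / ∏ j' ∈ Finset.range 1, (idx (Fin.cons j g) (j'+1) : ℝ) ^ s j')
        = a ^ j / (j:ℝ) ^ s 0 := by
      intro j _
      rw [sum_chainsIcc_zero]
      simp [idx_cons_one]
    rw [Finset.sum_congr rfl this]
    show _ = Zf a ([0].map s) k
    show _ = ∑ m ∈ Finset.Icc 1 k, Zf a [] m / (m:ℝ) ^ s 0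
    apply Finset.sum_congr rfl
    intro m _
    rfl
  | succ d ih =>
    intro s k
    rw [sum_chainsIcc_cons (d+1) 1 k]
    have hterm : ∀ j ∈ Finset.Icc 1 k,
        (∑ g ∈ chainsIcc (d+1) 1 j, a ^ (idx (Fin.cons j g) (d+1+1))
          / ∏ j' ∈ Finset.range (d+1+1), (idx (Fin.cons j g) (j'+1) : ℝ) ^ s j')
        = Zf a ((List.range (d+1)).map (s ∘ Nat.succ)) j / (j:ℝ) ^ s 0 := by
      intro j _
      rw [← ih (s ∘ Nat.succ) j, Finset.sum_div]
      apply Finset.sum_congr rfl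
      intro g _
      rw [idx_cons_succ j g (d+1) (by omega)]
      rw [Finset.prod_range_succ']
      have hp : ∀ j' ∈ Finset.range (d+1),
          ((idx (Fin.cons j g) (j'+1+1) : ℝ)) ^ s (j'+1)
          = ((idx g (j'+1) : ℝ)) ^ ((s ∘ Nat.succ) j') := by
        intro j' _
        rw [idx_cons_succ j g (j'+1) (by omega)]
        rfl
      rw [Finset.prod_congr rfl hp, idx_cons_one]
      rw [← div_div]
    rw [Finset.sum_congr rfl hterm]
    have hlist : (List.range (d+1+1)).map s
        = s 0 :: (List.range (d+1)).map (s ∘ Nat.succ) := by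
      rw [List.range_succ_eq_map, List.map_cons, List.map_map]
    rw [hlist]
    rfl

def psum (l : List ℕ) (r : ℕ) : ℕ := (l.take r).sum

@[simp] lemma psum_zero (l : List ℕ) : psum l 0 = 0 := rfl

lemma psum_cons (s : ℕ) (t : List ℕ) (r : ℕ) : psum (s::t) (r+1) = s + psum t r := by
  simp [psum]

lemma psum_pos (l : List ℕ) (hne : l ≠ []) (hl : ∀ x ∈ l, 1 ≤ x) (r : ℕ) :
    1 ≤ psum l (r+1) := by
  cases l with
  | nil => exact absurd rfl hne
  | cons x t =>
    rw [psum_cons]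
    have := hl x (by simp)
    omega

lemma sum_pos_of_ne (l : List ℕ) (hne : l ≠ []) (hl : ∀ x ∈ l, 1 ≤ x) : 1 ≤ l.sum := by
  cases l with
  | nil => exact absurd rfl hne
  | cons x t =>
    have := hl x (by simp)
    simp [List.sum_cons]
    omega

lemma idx_cons_of_eq {w : ℕ} (j : ℕ) (g : Fin w → ℕ) {x y : ℕ} (h : x = y + 1) (hy : 1 ≤ y) :
    idx (Fin.cons j g) x = idx g y := by
  subst h; exact idx_cons_succ j g y hy

def CS (a p : ℝ) (l : List ℕ) (n : ℕ) : ℝ :=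
  ∑ f ∈ chainsIcc l.sum 1 n,
    (∏ r ∈ Finset.range l.length,
        (1-p) ^ (idx f (psum l r + 1) - idx f (psum l (r+1)))) /
      (∏ j ∈ Finset.range l.sum, (idx f (j+1) : ℝ)) * G0 a p (idx f l.sum)

def ACS (a p : ℝ) (e : ℕ) (l : List ℕ) (b : ℕ) : ℝ :=
  ∑ f ∈ chainsIcc (l.sum + e + 1) 1 b,
    (1-p) ^ (b - idx f (e+1)) *
      (∏ r ∈ Finset.range l.length,
        (1-p) ^ (idx f (e + 1 + psum l r + 1) - idx f (e + 1 + psum l (r+1)))) /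
      (∏ j ∈ Finset.range (l.sum + e + 1), (idx f (j+1) : ℝ)) * G0 a p (idx f (l.sum + e + 1))

lemma ACS_eq (a p : ℝ) (l : List ℕ) (hl : ∀ x ∈ l, 1 ≤ x)
    (hCS : l = [] ∨ (l ≠ [] ∧ ∀ b, CS a p l b = Rf a p l b)) :
    ∀ e b, ACS a p e l b = (Aop p)^[e+1] (Rf a p l) b := by
  intro e
  induction e with
  | zero =>
    intro b
    simp only [zero_add, Function.iterate_one, ACS, Nat.add_zero, Aop]
    rw [sum_chainsIcc_cons l.sum 1 b]
    apply Finset.sum_congr rfl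
    intro j hj
    rw [Finset.mem_Icc] at hj
    rcases hCS with rfl | ⟨hne, hCS⟩
    · simp only [List.sum_nil, List.length_nil, Finset.range_zero, Finset.prod_empty]
      rw [sum_chainsIcc_zero]
      rw [idx_cons_one, Finset.prod_range_one, idx_cons_one]
      show (1-p) ^ (b - j) * 1 / (j:ℝ) * G0 a p j = (1-p) ^ (b - j) * Rf a p [] j / j
      show _ = (1-p) ^ (b - j) * G0 a p j / (j:ℝ)
      ring
    · rw [← hCS j]
      simp only [CS]
      rw [Finset.mul_sum, Finset.sum_div]
      apply Finset.sum_congr rfl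
      intro g hg
      rw [idx_cons_one]
      have h1 : ∀ r ∈ Finset.range l.length,
          (1-p) ^ (idx (Fin.cons j g) (1 + psum l r + 1) - idx (Fin.cons j g) (1 + psum l (r+1)))
          = (1-p) ^ (idx g (psum l r + 1) - idx g (psum l (r+1))) := by
        intro r _
        rw [idx_cons_of_eq j g (by omega : 1 + psum l r + 1 = (psum l r + 1) + 1) (by omega),
          idx_cons_of_eq j g (by omega : 1 + psum l (r+1) = psum l (r+1) + 1)
            (psum_pos l hne hl r)]
      rw [Finset.prod_congr rfl h1]
      rw [Finset.prod_range_succ']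
      have h2 : ∀ j' ∈ Finset.range l.sum,
          ((idx (Fin.cons j g) (j' + 1 + 1) : ℕ) : ℝ) = ((idx g (j' + 1) : ℕ) : ℝ) := by
        intro j' _
        rw [idx_cons_of_eq j g (rfl : j' + 1 + 1 = (j' + 1) + 1) (by omega)]
      rw [Finset.prod_congr rfl h2, idx_cons_one]
      rw [idx_cons_of_eq j g (rfl : l.sum + 1 = l.sum + 1) (sum_pos_of_ne l hne hl)]
      ring
  | succ e ih =>
    intro b
    rw [Function.iterate_succ_apply' (Aop p) (e+1)]
    simp only [ACS]
    rw [show l.sum + (e+1) + 1 = (l.sum + e + 1) + 1 by omega]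
    rw [sum_chainsIcc_cons (l.sum + e + 1) 1 b, Aop]
    apply Finset.sum_congr rfl
    intro j hj
    rw [Finset.mem_Icc] at hj
    rw [← ih j]
    simp only [ACS]
    rw [Finset.mul_sum, Finset.sum_div]
    apply Finset.sum_congr rfl
    intro g hg
    have hle : idx g (e + 1) ≤ j := idx_le_hi hg e (by omega)
    rw [idx_cons_of_eq j g (rfl : e + 1 + 1 = (e + 1) + 1) (by omega)]
    have hsplit : (1-p) ^ (b - idx g (e+1))
        = (1-p) ^ (b - j) * (1-p) ^ (j - idx g (e+1)) := by
      rw [← pow_add, show b - j + (j - idx g (e+1)) = b - idx g (e+1) by omega]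
    have h1 : ∀ r ∈ Finset.range l.length,
        (1-p) ^ (idx (Fin.cons j g) (e + 1 + 1 + psum l r + 1)
          - idx (Fin.cons j g) (e + 1 + 1 + psum l (r+1)))
        = (1-p) ^ (idx g (e + 1 + psum l r + 1) - idx g (e + 1 + psum l (r+1))) := by
      intro r _
      rw [idx_cons_of_eq j g
          (by omega : e + 1 + 1 + psum l r + 1 = (e + 1 + psum l r + 1) + 1) (by omega),
        idx_cons_of_eq j g
          (by omega : e + 1 + 1 + psum l (r+1) = (e + 1 + psum l (r+1)) + 1) (by omega)]
    rw [Finset.prod_congr rfl h1]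
    rw [Finset.prod_range_succ']
    have h2 : ∀ j' ∈ Finset.range (l.sum + e + 1),
        ((idx (Fin.cons j g) (j' + 1 + 1) : ℕ) : ℝ) = ((idx g (j' + 1) : ℕ) : ℝ) := by
      intro j' _
      rw [idx_cons_of_eq j g (rfl : j' + 1 + 1 = (j' + 1) + 1) (by omega)]
    rw [Finset.prod_congr rfl h2, idx_cons_one]
    rw [idx_cons_of_eq j g (rfl : l.sum + e + 1 + 1 = (l.sum + e + 1) + 1) (by omega)]
    rw [hsplit]
    ring

lemma CS_eq (a p : ℝ) : ∀ l : List ℕ, l ≠ [] → (∀ x ∈ l, 1 ≤ x) →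
    ∀ n, CS a p l n = Rf a p l n := by
  intro l
  induction l with
  | nil => intro h; exact absurd rfl h
  | cons s t ih =>
    intro _ hl n
    have hs : 1 ≤ s := hl s (by simp)
    have hlt : ∀ x ∈ t, 1 ≤ x := fun x hx => hl x (by simp [hx])
    obtain ⟨e, rfl⟩ : ∃ e, s = e + 1 := ⟨s-1, by omega⟩
    cases e with
    | zero =>
      simp only [CS, List.sum_cons, List.length_cons]
      rw [show 0 + 1 + t.sum = t.sum + 1 by omega]
      rw [sum_chainsIcc_cons t.sum 1 n]
      have hRf : Rf a p ((0+1) :: t) n = Bop (Rf a p t) n := by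
        simp [Rf]
      rw [hRf, Bop]
      apply Finset.sum_congr rfl
      intro j hj
      rw [Finset.mem_Icc] at hj
      by_cases hte : t = []
      · subst hte
        simp only [List.sum_nil, List.length_nil]
        rw [sum_chainsIcc_zero]
        rw [Finset.prod_range_one, Finset.prod_range_one]
        rw [idx_cons_one]
        have h0 : idx (Fin.cons j (fun i => i.elim0)) (psum [(0+1)] 0 + 1)
            - idx (Fin.cons j (fun i => i.elim0)) (psum [(0+1)] (0+1)) = 0 := by
          have e1 : psum [(0+1)] 0 + 1 = 1 := by simp [psum]
          have e2 : psum [(0+1)] (0+1) = 1 := by simp [psum]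
          rw [e1, e2]
          omega
        rw [h0, pow_zero]
        show (1:ℝ) / j * G0 a p j = G0 a p j / j
        ring
      · rw [← ih hte hlt j]
        simp only [CS]
        rw [Finset.sum_div]
        apply Finset.sum_congr rfl
        intro g hg
        rw [Finset.prod_range_succ', Finset.prod_range_succ']
        have hF0 : idx (Fin.cons j g) (psum ((0+1) :: t) 0 + 1)
            - idx (Fin.cons j g) (psum ((0+1) :: t) (0+1)) = 0 := by
          have e1 : psum ((0+1) :: t) 0 + 1 = 1 := by simp [psum]
          have e2 : psum ((0+1) :: t) (0+1) = 1 := by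
            rw [psum_cons]; simp
          rw [e1, e2]
          omega
        rw [hF0, pow_zero]
        have hblocks : ∀ r ∈ Finset.range t.length,
            (1-p) ^ (idx (Fin.cons j g) (psum ((0+1) :: t) (r+1) + 1)
              - idx (Fin.cons j g) (psum ((0+1) :: t) (r+1+1)))
            = (1-p) ^ (idx g (psum t r + 1) - idx g (psum t (r+1))) := by
          intro r _
          rw [idx_cons_of_eq j g
              (by rw [psum_cons]; omega : psum ((0+1) :: t) (r+1) + 1 = (psum t r + 1) + 1)
              (by omega),
            idx_cons_of_eq j g
              (by rw [psum_cons]; omega : psum ((0+1) :: t) (r+1+1) = psum t (r+1) + 1)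
              (psum_pos t hte hlt r)]
        rw [Finset.prod_congr rfl hblocks]
        have hden : ∀ j' ∈ Finset.range t.sum,
            ((idx (Fin.cons j g) (j' + 1 + 1) : ℕ) : ℝ) = ((idx g (j' + 1) : ℕ) : ℝ) := by
          intro j' _
          rw [idx_cons_of_eq j g (rfl : j' + 1 + 1 = (j' + 1) + 1) (by omega)]
        rw [Finset.prod_congr rfl hden, idx_cons_one]
        rw [idx_cons_of_eq j g (rfl : t.sum + 1 = t.sum + 1) (sum_pos_of_ne t hte hlt)]
        ring
    | succ e =>
      simp only [CS, List.sum_cons, List.length_cons]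
      rw [show e + 1 + 1 + t.sum = (t.sum + e + 1) + 1 by omega]
      rw [sum_chainsIcc_cons (t.sum + e + 1) 1 n]
      have hdisj : t = [] ∨ (t ≠ [] ∧ ∀ b, CS a p t b = Rf a p t b) := by
        by_cases hte : t = []
        · exact Or.inl hte
        · exact Or.inr ⟨hte, fun b => ih hte hlt b⟩
      have hRf : Rf a p ((e+1+1) :: t) n = Bop ((Aop p)^[e+1] (Rf a p t)) n := by
        simp [Rf]
      rw [hRf, Bop]
      apply Finset.sum_congr rfl
      intro j hj
      rw [Finset.mem_Icc] at hj
      rw [← ACS_eq a p t hlt hdisj e j]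
      simp only [ACS]
      rw [Finset.sum_div]
      apply Finset.sum_congr rfl
      intro g hg
      rw [Finset.prod_range_succ', Finset.prod_range_succ']
      have hF0 : (1-p) ^ (idx (Fin.cons j g) (psum ((e+1+1) :: t) 0 + 1)
          - idx (Fin.cons j g) (psum ((e+1+1) :: t) (0+1)))
          = (1-p) ^ (j - idx g (e+1)) := by
        have e1 : psum ((e+1+1) :: t) 0 + 1 = 1 := by simp [psum]
        rw [e1, idx_cons_one,
          idx_cons_of_eq j g
            (by rw [psum_cons, psum_zero] : psum ((e+1+1) :: t) (0+1) = (e+1) + 1)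
            (by omega)]
      rw [hF0]
      have hblocks : ∀ r ∈ Finset.range t.length,
          (1-p) ^ (idx (Fin.cons j g) (psum ((e+1+1) :: t) (r+1) + 1)
            - idx (Fin.cons j g) (psum ((e+1+1) :: t) (r+1+1)))
          = (1-p) ^ (idx g (e + 1 + psum t r + 1) - idx g (e + 1 + psum t (r+1))) := by
        intro r _
        rw [idx_cons_of_eq j g
            (by rw [psum_cons]; omega :
              psum ((e+1+1) :: t) (r+1) + 1 = (e + 1 + psum t r + 1) + 1) (by omega),
          idx_cons_of_eq j g
            (by rw [psum_cons]; omega :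
              psum ((e+1+1) :: t) (r+1+1) = (e + 1 + psum t (r+1)) + 1) (by omega)]
      rw [Finset.prod_congr rfl hblocks]
      have hden : ∀ j' ∈ Finset.range (t.sum + e + 1),
          ((idx (Fin.cons j g) (j' + 1 + 1) : ℕ) : ℝ) = ((idx g (j' + 1) : ℕ) : ℝ) := by
        intro j' _
        rw [idx_cons_of_eq j g (rfl : j' + 1 + 1 = (j' + 1) + 1) (by omega)]
      rw [Finset.prod_congr rfl hden, idx_cons_one]
      rw [idx_cons_of_eq j g (rfl : t.sum + e + 1 + 1 = (t.sum + e + 1) + 1) (by omega)]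
      ring

lemma list_sum_range_map (s : ℕ → ℕ) : ∀ d, ((List.range d).map s).sum = lsum s d := by
  intro d
  induction d with
  | zero => simp [lsum]
  | succ d ih =>
    rw [List.range_succ, List.map_append, List.sum_append, ih]
    simp [lsum, Finset.sum_range_succ]

lemma psum_range_map (s : ℕ → ℕ) (d r : ℕ) (h : r ≤ d) :
    psum ((List.range d).map s) r = lsum s r := by
  rw [psum, ← List.map_take, List.take_range, min_eq_left h, list_sum_range_map]


theorem gencev_theorem (d : ℕ) (hd : 1 ≤ d) (s : ℕ → ℕ) (hs : ∀ i < d, 1 ≤ s i)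
    (n : ℕ) (hn : 1 ≤ n) (a p : ℝ) :
    ∑ k ∈ Finset.Icc 1 n, (n.choose k : ℝ) * p ^ k * (1 - p) ^ (n - k) *
        ∑ m ∈ chainsIcc d 1 k,
          a ^ (idx m d) / ∏ j ∈ Finset.range d, (idx m (j + 1) : ℝ) ^ s j
      = ∑ f ∈ chainsIcc (lsum s d) 1 n,
          (∏ r ∈ Finset.range d, (1 - p) ^ (idx f (lsum s r + 1) - idx f (lsum s (r + 1)))) /
              (∏ j ∈ Finset.range (lsum s d), (idx f (j + 1) : ℝ)) *
            ((1 - p + a * p) ^ (idx f (lsum s d)) - (1 - p) ^ (idx f (lsum s d))) := by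
  obtain ⟨d', rfl⟩ : ∃ d', d = d' + 1 := ⟨d - 1, by omega⟩
  set l := (List.range (d'+1)).map s with hl
  have hne : l ≠ [] := by simp [hl]
  have hentries : ∀ x ∈ l, 1 ≤ x := by
    intro x hx
    rw [hl, List.mem_map] at hx
    obtain ⟨i, hi, rfl⟩ := hx
    exact hs i (List.mem_range.1 hi)
  have step1 : ∑ k ∈ Finset.Icc 1 n, (n.choose k : ℝ) * p ^ k * (1 - p) ^ (n - k) *
        ∑ m ∈ chainsIcc (d'+1) 1 k,
          a ^ (idx m (d'+1)) / ∏ j ∈ Finset.range (d'+1), (idx m (j + 1) : ℝ) ^ s j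
      = Bin p (Zf a l) n := by
    rw [Bin]
    apply Finset.sum_congr rfl
    intro k _
    rw [Z_eq a d' s k]
  rw [step1, MT a p l hentries n, ← CS_eq a p l hne hentries n]
  simp only [CS, G0]
  have hw : l.sum = lsum s (d'+1) := list_sum_range_map s (d'+1)
  have hlen : l.length = d' + 1 := by simp [hl]
  rw [hw, hlen]
  apply Finset.sum_congr rfl
  intro f _
  have hprod : ∀ r ∈ Finset.range (d'+1),
      (1-p) ^ (idx f (psum l r + 1) - idx f (psum l (r+1)))
      = (1-p) ^ (idx f (lsum s r + 1) - idx f (lsum s (r+1))) := by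
    intro r hr
    rw [Finset.mem_range] at hr
    rw [psum_range_map s (d'+1) r (by omega), psum_range_map s (d'+1) (r+1) (by omega)]
  rw [Finset.prod_congr rfl hprod]
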